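/- Let p be an odd prime and let G be a finite p-group of nilpotency class two with G' = Z(G). For i = 1, 2 let Δᵢ be a bilinear form on G with associated circle operation ∘ᵢ, and let θᵢ: G → G be a bijection with θᵢ(x·y) = θᵢ(x) ∘ᵢ θᵢ(y) for all x, y ∈ G. Define Δ: G × G → G' by Δ(x, y) = θ₂(Δ₁(θ₂⁻¹(x), θ₂⁻¹(y)))·Δ₂(x, y). Then Δ is a bilinear form on G, and the composite map θ: G → G, θ(x) = θ₂(θ₁(x)), satisfies θ(x·y) = θ(x)·θ(y)·Δ(θ(x), θ(y)) for all x, y ∈ G; that is, θ is an isomorphism from G onto the group (G, ∘) for the circle operation ∘ associated to Δ. -/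

import Mathlib

/-- The commutator `[x, y] = x⁻¹ * y⁻¹ * x * y` in the paper's convention. -/
def pcomm {G : Type*} [Group G] (x y : G) : G := x⁻¹ * y⁻¹ * x * y

open scoped commutatorElement in
theorem pcomm_mem_commutator {G : Type*} [Group G] (x y : G) :
    pcomm x y ∈ commutator G := by
  have h : pcomm x y = ⁅x⁻¹, y⁻¹⁆ := by
    simp [pcomm, commutatorElement_def, mul_assoc]
  rw [h]
  exact Subgroup.commutator_mem_commutator (Subgroup.mem_top _) (Subgroup.mem_top _)

/-- A bilinear form on a group `G` of class two with `G' = Z(G)`: a map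
`Δ : G/G' × G/G' → G'` which is multiplicative in each variable. -/
def IsBilinearForm {G : Type*} [Group G] (Δ : G → G → G) : Prop :=
  (∀ x y : G, Δ x y ∈ commutator G) ∧
  (∀ x y w : G, w ∈ commutator G → Δ (x * w) y = Δ x y) ∧
  (∀ x y w : G, w ∈ commutator G → Δ x (y * w) = Δ x y) ∧
  (∀ x₁ x₂ y : G, Δ (x₁ * x₂) y = Δ x₁ y * Δ x₂ y) ∧
  (∀ x y₁ y₂ : G, Δ x (y₁ * y₂) = Δ x y₁ * Δ x y₂)

/-- The circle operation `x ∘ y = x·y·Δ(x, y)` associated to a bilinear form `Δ`. -/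
def circ {G : Type*} [Group G] (Δ : G → G → G) (x y : G) : G := x * y * Δ x y

/-- The circle inverse `x^{⊖1} = x⁻¹·Δ(x, x)`. -/
def oinv {G : Type*} [Group G] (Δ : G → G → G) (x : G) : G := x⁻¹ * Δ x x

/-- The circle commutator `[x, y]_∘ = x^{⊖1} ∘ y^{⊖1} ∘ x ∘ y`. -/
def ocomm {G : Type*} [Group G] (Δ : G → G → G) (x y : G) : G :=
  circ Δ (circ Δ (circ Δ (oinv Δ x) (oinv Δ y)) x) y

section Aux

variable {G : Type*} [Group G]

theorem of_eq_one_iff' {x : G} : Abelianization.of x = 1 ↔ x ∈ commutator G :=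
  QuotientGroup.eq_one_iff x

theorem bf_one_left {Δ : G → G → G} (h : IsBilinearForm Δ) (y : G) : Δ 1 y = 1 := by
  have := h.2.2.2.1 1 1 y
  simpa using this.symm

theorem bf_one_right {Δ : G → G → G} (h : IsBilinearForm Δ) (x : G) : Δ x 1 = 1 := by
  have := h.2.2.2.2 x 1 1
  simpa using this.symm

theorem bf_comm_left {Δ : G → G → G} (h : IsBilinearForm Δ) {w : G}
    (hw : w ∈ commutator G) (y : G) : Δ w y = 1 := by
  have := h.2.1 1 y w hw
  simpa [bf_one_left h] using this

theorem bf_comm_right {Δ : G → G → G} (h : IsBilinearForm Δ) {w : G}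
    (hw : w ∈ commutator G) (x : G) : Δ x w = 1 := by
  have := h.2.2.1 x 1 w hw
  simpa [bf_one_right h] using this

/-- `of ∘ θ` as a monoid hom to the abelianization. -/
def thetaHom {Δ : G → G → G} (h : IsBilinearForm Δ) (θ : G ≃ G)
    (hθ : ∀ x y : G, θ (x * y) = circ Δ (θ x) (θ y)) : G →* Abelianization G :=
  MonoidHom.mk' (fun x => Abelianization.of (θ x)) (by
    intro a b
    show Abelianization.of (θ (a * b)) = Abelianization.of (θ a) * Abelianization.of (θ b)
    rw [hθ a b]
    show Abelianization.of (θ a * θ b * Δ (θ a) (θ b)) = _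
    rw [map_mul, map_mul, of_eq_one_iff'.mpr (h.1 (θ a) (θ b)), mul_one])

theorem theta_comm_mem {Δ : G → G → G} (h : IsBilinearForm Δ) (θ : G ≃ G)
    (hθ : ∀ x y : G, θ (x * y) = circ Δ (θ x) (θ y)) {w : G}
    (hw : w ∈ commutator G) : θ w ∈ commutator G := by
  have := Abelianization.commutator_subset_ker (thetaHom h θ hθ) hw
  rw [MonoidHom.mem_ker] at this
  exact of_eq_one_iff'.mp this

theorem theta_mul_comm {Δ : G → G → G} (h : IsBilinearForm Δ) (θ : G ≃ G)
    (hθ : ∀ x y : G, θ (x * y) = circ Δ (θ x) (θ y)) (a : G) {c : G}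
    (hc : c ∈ commutator G) : θ (a * c) = θ a * θ c := by
  rw [hθ a c]
  show θ a * θ c * Δ (θ a) (θ c) = θ a * θ c
  rw [bf_comm_right h (theta_comm_mem h θ hθ hc), mul_one]

theorem symm_congr {G : Type*} [Group G] [Finite G] {Δ : G → G → G}
    (h : IsBilinearForm Δ) (θ : G ≃ G)
    (hθ : ∀ x y : G, θ (x * y) = circ Δ (θ x) (θ y)) {a b : G}
    (hab : Abelianization.of a = Abelianization.of b) :
    Abelianization.of (θ.symm a) = Abelianization.of (θ.symm b) := by
  set φ := Abelianization.lift (thetaHom h θ hθ) with hφ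
  have hφof : ∀ x : G, φ (Abelianization.of x) = Abelianization.of (θ x) := fun x => rfl
  have hsurj : Function.Surjective φ := by
    intro z
    obtain ⟨g, rfl⟩ := Quotient.exists_rep z
    exact ⟨Abelianization.of (θ.symm g), by rw [hφof, Equiv.apply_symm_apply]; rfl⟩
  have hinj : Function.Injective φ := Finite.injective_iff_surjective.mpr hsurj
  apply hinj
  rw [hφof, hφof, Equiv.apply_symm_apply, Equiv.apply_symm_apply]
  exact hab

/-- `θ.symm (a)` and `θ.symm (b)` differ by a commutator when `of a = of b`. -/
theorem symm_factor {G : Type*} [Group G] [Finite G] {Δ : G → G → G}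
    (h : IsBilinearForm Δ) (θ : G ≃ G)
    (hθ : ∀ x y : G, θ (x * y) = circ Δ (θ x) (θ y)) {a b : G}
    (hab : Abelianization.of a = Abelianization.of b) :
    ∃ c ∈ commutator G, θ.symm a = θ.symm b * c := by
  have := symm_congr h θ hθ hab.symm
  have hmem : (θ.symm b)⁻¹ * θ.symm a ∈ commutator G := by
    have := QuotientGroup.eq.mp this
    simpa using this
  exact ⟨(θ.symm b)⁻¹ * θ.symm a, hmem, by group⟩

end Aux

/-- if `θᵢ : G → (G, ∘ᵢ)` are isomorphisms for bilinear forms `Δᵢ`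
(`i = 1, 2`), then `Δ(x, y) = θ₂(Δ₁(θ₂⁻¹(x), θ₂⁻¹(y)))·Δ₂(x, y)` is a bilinear form,
and `θ₁θ₂` is an isomorphism from `G` onto the circle group associated to `Δ`. -/
theorem stmt_16 {p : ℕ} (hp : p.Prime) (hodd : Odd p)
    {G : Type*} [Group G] [Fintype G] (hpG : IsPGroup p G)
    (hc2 : (⊤ : Subgroup G).lowerCentralSeries 2 = ⊥) (hc1 : (⊤ : Subgroup G).lowerCentralSeries 1 ≠ ⊥)
    (hGZ : commutator G = Subgroup.center G)
    (Δ₁ Δ₂ : G → G → G) (hΔ₁ : IsBilinearForm Δ₁) (hΔ₂ : IsBilinearForm Δ₂)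
    (θ₁ θ₂ : G ≃ G)
    (hθ₁ : ∀ x y : G, θ₁ (x * y) = circ Δ₁ (θ₁ x) (θ₁ y))
    (hθ₂ : ∀ x y : G, θ₂ (x * y) = circ Δ₂ (θ₂ x) (θ₂ y)) :
    IsBilinearForm (fun x y : G => θ₂ (Δ₁ (θ₂.symm x) (θ₂.symm y)) * Δ₂ x y) ∧
    ∀ x y : G, θ₂ (θ₁ (x * y)) =
      circ (fun x y : G => θ₂ (Δ₁ (θ₂.symm x) (θ₂.symm y)) * Δ₂ x y)
        (θ₂ (θ₁ x)) (θ₂ (θ₁ y)) := by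
  have hcentral : ∀ w ∈ commutator G, ∀ g : G, w * g = g * w := by
    intro w hw g
    rw [hGZ] at hw
    exact ((Subgroup.mem_center_iff.mp hw) g).symm
  -- θ₂ maps the commutator subgroup into itself
  have hθ₂C : ∀ {w : G}, w ∈ commutator G → θ₂ w ∈ commutator G :=
    fun hw => theta_comm_mem hΔ₂ θ₂ hθ₂ hw
  -- congruence lemmas for θ₂.symm
  have hsF : ∀ {a b : G}, Abelianization.of a = Abelianization.of b →
      ∃ c ∈ commutator G, θ₂.symm a = θ₂.symm b * c :=
    fun hab => symm_factor hΔ₂ θ₂ hθ₂ hab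
  have hofC : ∀ {w : G}, w ∈ commutator G → Abelianization.of w = 1 :=
    fun hw => of_eq_one_iff'.mpr hw
  constructor
  · refine ⟨?_, ?_, ?_, ?_, ?_⟩
    · intro x y
      exact mul_mem (hθ₂C (hΔ₁.1 _ _)) (hΔ₂.1 _ _)
    · intro x y w hw
      obtain ⟨c, hc, heq⟩ := hsF (a := x * w) (b := x)
        (by rw [map_mul, hofC hw, mul_one])
      simp only [heq, hΔ₁.2.1 _ _ _ hc, hΔ₂.2.1 _ _ _ hw]
    · intro x y w hw
      obtain ⟨c, hc, heq⟩ := hsF (a := y * w) (b := y)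
        (by rw [map_mul, hofC hw, mul_one])
      simp only [heq, hΔ₁.2.2.1 _ _ _ hc, hΔ₂.2.2.1 _ _ _ hw]
    · intro x₁ x₂ y
      obtain ⟨c, hc, heq⟩ := hsF (a := x₁ * x₂) (b := θ₂ (θ₂.symm x₁ * θ₂.symm x₂))
        (by
          rw [hθ₂]
          show _ = Abelianization.of
            (θ₂ (θ₂.symm x₁) * θ₂ (θ₂.symm x₂) * Δ₂ (θ₂ (θ₂.symm x₁)) (θ₂ (θ₂.symm x₂)))
          rw [map_mul, map_mul, hofC (hΔ₂.1 _ _), mul_one,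
            Equiv.apply_symm_apply, Equiv.apply_symm_apply, map_mul])
      rw [Equiv.symm_apply_apply] at heq
      have hD1 : Δ₁ (θ₂.symm (x₁ * x₂)) (θ₂.symm y)
          = Δ₁ (θ₂.symm x₁) (θ₂.symm y) * Δ₁ (θ₂.symm x₂) (θ₂.symm y) := by
        rw [heq, hΔ₁.2.1 _ _ _ hc, hΔ₁.2.2.2.1]
      simp only [hD1, hΔ₂.2.2.2.1 x₁ x₂ y]
      rw [theta_mul_comm hΔ₂ θ₂ hθ₂ _ (hΔ₁.1 _ _)]
      set A := θ₂ (Δ₁ (θ₂.symm x₁) (θ₂.symm y))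
      set B := θ₂ (Δ₁ (θ₂.symm x₂) (θ₂.symm y))
      have hBd : B * Δ₂ x₁ y = Δ₂ x₁ y * B :=
        (hcentral _ (hΔ₂.1 x₁ y) B).symm
      calc A * B * (Δ₂ x₁ y * Δ₂ x₂ y)
          = A * (B * Δ₂ x₁ y) * Δ₂ x₂ y := by group
        _ = A * (Δ₂ x₁ y * B) * Δ₂ x₂ y := by rw [hBd]
        _ = A * Δ₂ x₁ y * (B * Δ₂ x₂ y) := by group
    · intro x y₁ y₂
      obtain ⟨c, hc, heq⟩ := hsF (a := y₁ * y₂) (b := θ₂ (θ₂.symm y₁ * θ₂.symm y₂))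
        (by
          rw [hθ₂]
          show _ = Abelianization.of
            (θ₂ (θ₂.symm y₁) * θ₂ (θ₂.symm y₂) * Δ₂ (θ₂ (θ₂.symm y₁)) (θ₂ (θ₂.symm y₂)))
          rw [map_mul, map_mul, hofC (hΔ₂.1 _ _), mul_one,
            Equiv.apply_symm_apply, Equiv.apply_symm_apply, map_mul])
      rw [Equiv.symm_apply_apply] at heq
      have hD1 : Δ₁ (θ₂.symm x) (θ₂.symm (y₁ * y₂))
          = Δ₁ (θ₂.symm x) (θ₂.symm y₁) * Δ₁ (θ₂.symm x) (θ₂.symm y₂) := by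
        rw [heq, hΔ₁.2.2.1 _ _ _ hc, hΔ₁.2.2.2.2]
      simp only [hD1, hΔ₂.2.2.2.2 x y₁ y₂]
      rw [theta_mul_comm hΔ₂ θ₂ hθ₂ _ (hΔ₁.1 _ _)]
      set A := θ₂ (Δ₁ (θ₂.symm x) (θ₂.symm y₁))
      set B := θ₂ (Δ₁ (θ₂.symm x) (θ₂.symm y₂))
      have hBd : B * Δ₂ x y₁ = Δ₂ x y₁ * B :=
        (hcentral _ (hΔ₂.1 x y₁) B).symm
      calc A * B * (Δ₂ x y₁ * Δ₂ x y₂)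
          = A * (B * Δ₂ x y₁) * Δ₂ x y₂ := by group
        _ = A * (Δ₂ x y₁ * B) * Δ₂ x y₂ := by rw [hBd]
        _ = A * Δ₂ x y₁ * (B * Δ₂ x y₂) := by group
  · intro x y
    rw [hθ₁ x y]
    show θ₂ (θ₁ x * θ₁ y * Δ₁ (θ₁ x) (θ₁ y)) = _
    rw [theta_mul_comm hΔ₂ θ₂ hθ₂ _ (hΔ₁.1 _ _), hθ₂]
    show θ₂ (θ₁ x) * θ₂ (θ₁ y) * Δ₂ (θ₂ (θ₁ x)) (θ₂ (θ₁ y)) * θ₂ (Δ₁ (θ₁ x) (θ₁ y))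
        = θ₂ (θ₁ x) * θ₂ (θ₁ y) *
          (θ₂ (Δ₁ (θ₂.symm (θ₂ (θ₁ x))) (θ₂.symm (θ₂ (θ₁ y)))) * Δ₂ (θ₂ (θ₁ x)) (θ₂ (θ₁ y)))
    rw [Equiv.symm_apply_apply, Equiv.symm_apply_apply]
    have : Δ₂ (θ₂ (θ₁ x)) (θ₂ (θ₁ y)) * θ₂ (Δ₁ (θ₁ x) (θ₁ y))
        = θ₂ (Δ₁ (θ₁ x) (θ₁ y)) * Δ₂ (θ₂ (θ₁ x)) (θ₂ (θ₁ y)) :=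
      hcentral _ (hΔ₂.1 _ _) _
    rw [mul_assoc, this, ← mul_assoc, mul_assoc]
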